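/- For each variable x_i, the ideal x_i·I_{(d; a_1,...,a_n)} can be extended by linear quotients to I_{(d+1; a_1,...,a_i+1,...,a_n)}. Consequently, for any nonnegative integers c_1,...,c_n, the ideal x_1^{c_1}···x_n^{c_n}·I_{(d; a_1,...,a_n)} can be extended by linear quotients to I_{(d + Σc_i; a_1+c_1,...,a_n+c_n)}. -/

import Mathlib

/-- A monomial in `K[x_1,...,x_n]` is identified with its exponent vector. -/
abbrev Mon (n : ℕ) := Fin n → ℕ

/-- Total degree of a monomial. -/
def degree {n : ℕ} (u : Mon n) : ℕ := ∑ i, u i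

/-- A monomial ideal is identified with the set of exponent vectors of the monomials it
contains; this set is closed under multiplication by monomials. -/
def IsMonomialIdeal {n : ℕ} (I : Set (Mon n)) : Prop :=
  ∀ u ∈ I, ∀ w : Mon n, u + w ∈ I

/-- The minimal monomial generating set `G(I)` of a monomial ideal: monomials of `I`
minimal with respect to divisibility (pointwise `≤` of exponent vectors). -/
def minGens {n : ℕ} (I : Set (Mon n)) : Set (Mon n) :=
  {u | u ∈ I ∧ ∀ v ∈ I, v ≤ u → v = u}

/-- `exch v i j` is the exponent vector of `x_j * (v / x_i)` (for `i ≠ j`). -/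
def exch {n : ℕ} (v : Mon n) (i j : Fin n) : Mon n :=
  fun k => if k = i then v k - 1 else if k = j then v k + 1 else v k

/-- `component I d` is the ideal `I_⟨d⟩` generated by the degree-`d` monomials of `I`. -/
def component {n : ℕ} (I : Set (Mon n)) (d : ℕ) : Set (Mon n) :=
  {w | ∃ u ∈ I, degree u = d ∧ u ≤ w}

/-- `I` is generated in a single degree. -/
def GeneratedInSingleDegree {n : ℕ} (I : Set (Mon n)) : Prop :=
  ∃ d, ∀ u ∈ minGens I, degree u = d

/-- A polymatroidal ideal: generated in a single degree and its generators satisfy the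
exchange property. -/
def IsPolymatroidal {n : ℕ} (I : Set (Mon n)) : Prop :=
  GeneratedInSingleDegree I ∧
  ∀ u ∈ minGens I, ∀ v ∈ minGens I, ∀ i : Fin n, v i < u i →
    ∃ j : Fin n, u j < v j ∧ exch u i j ∈ I

/-- Componentwise polymatroidal: each graded component ideal `I_⟨d⟩` is polymatroidal. -/
def ComponentwisePolymatroidal {n : ℕ} (I : Set (Mon n)) : Prop :=
  ∀ d : ℕ, IsPolymatroidal (component I d)

/-- Non-pure dual exchange property: for `u, v ∈ G(I)` with `deg u ≤ deg v` and
`deg_{x_i} v < deg_{x_i} u` there is `j` with `deg_{x_j} v > deg_{x_j} u` and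
`x_i * (v / x_j) ∈ I`. -/
def NonPureDualExchange {n : ℕ} (I : Set (Mon n)) : Prop :=
  ∀ u ∈ minGens I, ∀ v ∈ minGens I, degree u ≤ degree v →
    ∀ i : Fin n, v i < u i → ∃ j : Fin n, u j < v j ∧ exch v j i ∈ I

/-- Non-pure exchange property: for `u, v ∈ G(I)` with `deg u ≤ deg v` and
`deg_{x_i} v > deg_{x_i} u` there is `j` with `deg_{x_j} v < deg_{x_j} u` and
`x_j * (v / x_i) ∈ I`. -/
def NonPureExchange {n : ℕ} (I : Set (Mon n)) : Prop :=
  ∀ u ∈ minGens I, ∀ v ∈ minGens I, degree u ≤ degree v →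
    ∀ i : Fin n, u i < v i → ∃ j : Fin n, v j < u j ∧ exch v i j ∈ I

/-- The monomial ideal generated by a set `G` of monomials. -/
def genBy {n : ℕ} (G : Set (Mon n)) : Set (Mon n) := {w | ∃ u ∈ G, u ≤ w}

/-- The product of two monomial ideals (as sets of monomials). -/
def mulIdeal {n : ℕ} (I J : Set (Mon n)) : Set (Mon n) :=
  {w | ∃ u ∈ I, ∃ v ∈ J, w = u + v}

/-- The product of a monomial ideal with the monomial `u`. -/
def mulMon {n : ℕ} (u : Mon n) (I : Set (Mon n)) : Set (Mon n) :=
  (fun v => u + v) '' I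

/-- Strong exchange property: for all generators `u, v` and all `i, j` with
`deg_{x_i} u > deg_{x_i} v` and `deg_{x_j} u < deg_{x_j} v`, `x_j * (u / x_i) ∈ I`. -/
def StrongExchange {n : ℕ} (I : Set (Mon n)) : Prop :=
  ∀ u ∈ minGens I, ∀ v ∈ minGens I, ∀ i j : Fin n,
    v i < u i → u j < v j → exch u i j ∈ I

/-- The Veronese type ideal `I_{(d; a_1,...,a_n)}`: generated by all monomials of
degree `d` with `deg_{x_i} ≤ a i` for all `i`. -/
def veronese (n d : ℕ) (a : Fin n → ℕ) : Set (Mon n) :=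
  {w | ∃ u : Mon n, degree u = d ∧ (∀ i, u i ≤ a i) ∧ u ≤ w}

/-- A list of monomials is an admissible order if each colon ideal
`(u_1,...,u_{i-1}) : u_i` is generated by a subset `S` of the variables. -/
def AdmissibleOrder {n : ℕ} (L : List (Mon n)) : Prop :=
  ∀ i : Fin L.length, ∃ S : Set (Fin n),
    ∀ w : Mon n, (w + L.get i ∈ genBy {u | u ∈ L.take i.1}) ↔ ∃ k ∈ S, 1 ≤ w k

/-- `I` has linear quotients: some ordering of `G(I)` is admissible. -/
def HasLinearQuotients {n : ℕ} (I : Set (Mon n)) : Prop :=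
  ∃ L : List (Mon n), L.Nodup ∧ (∀ u, u ∈ L ↔ u ∈ minGens I) ∧ AdmissibleOrder L

/-- `I` can be extended by linear quotients to `J`: `G(I) ⊆ G(J)` and the elements of
`G(J) \ G(I)` can be ordered `v_1,...,v_m` such that each colon ideal
`(G(I), v_1,...,v_i) : v_{i+1}` is generated by a subset of the variables. -/
def ExtendsByLinearQuotients {n : ℕ} (I J : Set (Mon n)) : Prop :=
  I ⊆ J ∧ minGens I ⊆ minGens J ∧
  ∃ L : List (Mon n), L.Nodup ∧ (∀ u, u ∈ L ↔ u ∈ minGens J ∧ u ∉ minGens I) ∧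
    ∀ i : Fin L.length, ∃ S : Set (Fin n),
      ∀ w : Mon n,
        (w + L.get i ∈ genBy (minGens I ∪ {u | u ∈ L.take i.1})) ↔ ∃ k ∈ S, 1 ≤ w k

/-- The minimal generators of `I ⊆ K[x,y]` are `u_i = x^{a i} y^{b i}`, `i = 0,...,m`,
with `a` strictly decreasing, `b` strictly increasing, `a m = 0` and `b 0 = 0`
(so `I` is `(x,y)`-primary). -/
def yxTightGens (m : ℕ) (a b : ℕ → ℕ) (I : Set (Mon 2)) : Prop :=
  (∀ i k : ℕ, i ≤ m → k ≤ m → i < k → a k < a i ∧ b i < b k) ∧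
  a m = 0 ∧ b 0 = 0 ∧
  minGens I = {u | ∃ i ≤ m, u = ![a i, b i]}

/-- `I` is `x`-tight in `[0, r]`: the `x`-exponents of the generators are exactly
`r, r-1, ..., 1, 0` (i.e. `a (r - i) = i`). -/
def xTight (I : Set (Mon 2)) (r : ℕ) : Prop :=
  ∃ b : ℕ → ℕ, yxTightGens r (fun i => r - i) b I

/-- `I` is `y`-tight in `[0, s]`: the `y`-exponents of the generators are exactly
`0, 1, ..., s`. -/
def yTight (I : Set (Mon 2)) (s : ℕ) : Prop :=
  ∃ a : ℕ → ℕ, yxTightGens s a (fun i => i) I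

/-- `I` is `yx`-tight: there is `0 ≤ j ≤ m` with `b i = i` for `i = 0,...,j` and
`a (m - i) = i` for `i = 0,...,m-j`. -/
def yxTight (I : Set (Mon 2)) : Prop :=
  ∃ (m : ℕ) (a b : ℕ → ℕ), yxTightGens m a b I ∧
    ∃ j ≤ m, (∀ i ≤ j, b i = i) ∧ ∀ i ≤ m - j, a (m - i) = i

/-- Powers of a monomial ideal. -/
def powIdeal {n : ℕ} (I : Set (Mon n)) : ℕ → Set (Mon n)
  | 0 => Set.univ
  | k + 1 => mulIdeal (powIdeal I k) I

section Helpers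
variable {n : ℕ}

lemma degree_mono {u v : Mon n} (h : u ≤ v) : degree u ≤ degree v :=
  Finset.sum_le_sum fun i _ => h i

lemma eq_of_le_of_degree_le {u v : Mon n} (h : u ≤ v) (hd : degree v ≤ degree u) : u = v := by
  funext k
  by_contra hk
  have h1 : u k < v k := lt_of_le_of_ne (h k) hk
  have : degree u < degree v :=
    Finset.sum_lt_sum (fun i _ => h i) ⟨k, Finset.mem_univ k, h1⟩
  omega

lemma degree_add (u v : Mon n) : degree (u + v) = degree u + degree v := by
  simp [degree, Finset.sum_add_distrib]

lemma degree_single (i : Fin n) (m : ℕ) : degree (Pi.single i m) = m := by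
  simp [degree]

lemma minGens_veronese (d : ℕ) (a : Fin n → ℕ) :
    minGens (veronese n d a) = {u | degree u = d ∧ ∀ i, u i ≤ a i} := by
  ext u
  constructor
  · rintro ⟨⟨g, hg1, hg2, hg3⟩, hmin⟩
    have hgV : g ∈ veronese n d a := ⟨g, hg1, hg2, le_refl g⟩
    have := hmin g hgV hg3
    subst this
    exact ⟨hg1, hg2⟩
  · rintro ⟨h1, h2⟩
    refine ⟨⟨u, h1, h2, le_refl u⟩, ?_⟩
    rintro v ⟨g, hg1, _, hg3⟩ hvu
    have hdv : d ≤ degree v := hg1 ▸ degree_mono hg3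
    exact eq_of_le_of_degree_le hvu (h1 ▸ hdv)

lemma minGens_mulMon (c : Mon n) (I : Set (Mon n)) :
    minGens (mulMon c I) = (fun v => c + v) '' minGens I := by
  ext x
  constructor
  · rintro ⟨⟨v, hv, rfl⟩, hmin⟩
    refine ⟨v, ⟨hv, ?_⟩, rfl⟩
    intro v' hv' hle
    have := hmin (c + v') ⟨v', hv', rfl⟩ (add_le_add_right hle c)
    exact add_left_cancel this
  · rintro ⟨v, ⟨hv, hmin⟩, rfl⟩
    refine ⟨⟨v, hv, rfl⟩, ?_⟩
    rintro y ⟨v', hv', rfl⟩ hle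
    have : v' ≤ v := fun k => by have := hle k; simpa using this
    rw [hmin v' hv' this]

lemma mem_genBy_image (c : Mon n) (G : Set (Mon n)) (y : Mon n) :
    c + y ∈ genBy ((fun v => c + v) '' G) ↔ y ∈ genBy G := by
  constructor
  · rintro ⟨x, ⟨g, hg, rfl⟩, hle⟩
    exact ⟨g, hg, fun k => by have := hle k; simpa using this⟩
  · rintro ⟨g, hg, hle⟩
    exact ⟨c + g, ⟨g, hg, rfl⟩, add_le_add_right hle c⟩

lemma genBy_congr {G G' : Set (Mon n)} (h : G = G') : genBy G = genBy G' := by rw [h]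

lemma extends_refl (I : Set (Mon n)) : ExtendsByLinearQuotients I I := by
  refine ⟨le_refl _, le_refl _, [], List.nodup_nil, by simp, ?_⟩
  rintro ⟨i, hi⟩
  simp at hi
lemma extends_trans {A B C : Set (Mon n)} (h1 : ExtendsByLinearQuotients A B)
    (h2 : ExtendsByLinearQuotients B C) : ExtendsByLinearQuotients A C := by
  obtain ⟨hAB, hGAB, L1, hn1, hm1, hc1⟩ := h1
  obtain ⟨hBC, hGBC, L2, hn2, hm2, hc2⟩ := h2
  have hL1B : ∀ u ∈ L1, u ∈ minGens B := fun u hu => ((hm1 u).1 hu).1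
  have hL2nB : ∀ u ∈ L2, u ∉ minGens B := fun u hu => ((hm2 u).1 hu).2
  have hBset : minGens A ∪ {u | u ∈ L1} = minGens B := by
    ext x
    constructor
    · rintro (hx | hx)
      · exact hGAB hx
      · exact hL1B x hx
    · intro hx
      by_cases hxA : x ∈ minGens A
      · exact Or.inl hxA
      · exact Or.inr ((hm1 x).2 ⟨hx, hxA⟩)
  refine ⟨hAB.trans hBC, hGAB.trans hGBC, L1 ++ L2, ?_, ?_, ?_⟩
  · exact hn1.append hn2 (fun u hu1 hu2 => hL2nB u hu2 (hL1B u hu1))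
  · intro u
    simp only [List.mem_append, hm1 u, hm2 u]
    constructor
    · rintro (⟨h1, h2⟩ | ⟨h1, h2⟩)
      · exact ⟨hGBC h1, h2⟩
      · exact ⟨h1, fun h => h2 (hGAB h)⟩
    · rintro ⟨h1, h2⟩
      by_cases hB : u ∈ minGens B
      · exact Or.inl ⟨hB, h2⟩
      · exact Or.inr ⟨h1, hB⟩
  · rintro ⟨i, hi⟩
    simp only [List.length_append] at hi
    by_cases hcase : i < L1.length
    · obtain ⟨S, hS⟩ := hc1 ⟨i, hcase⟩
      refine ⟨S, fun w => ?_⟩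
      have hget : (L1 ++ L2).get ⟨i, by simpa [List.length_append] using hi⟩ =
          L1.get ⟨i, hcase⟩ := by
        exact List.getElem_append_left hcase
      have htake : (L1 ++ L2).take i = L1.take i :=
        List.take_append_of_le_length (le_of_lt hcase)
      rw [hget, htake]
      exact hS w
    · push_neg at hcase
      have hj : i - L1.length < L2.length := by omega
      obtain ⟨S, hS⟩ := hc2 ⟨i - L1.length, hj⟩
      refine ⟨S, fun w => ?_⟩
      have hget : (L1 ++ L2).get ⟨i, by simpa [List.length_append] using hi⟩ =
          L2.get ⟨i - L1.length, hj⟩ := by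
        exact List.getElem_append_right hcase
      have htake : (L1 ++ L2).take i = L1 ++ L2.take (i - L1.length) := by
        rw [List.take_append, List.take_of_length_le hcase]
      have hsets : minGens A ∪ {u | u ∈ (L1 ++ L2).take i}
          = minGens B ∪ {u | u ∈ L2.take (i - L1.length)} := by
        rw [htake, ← hBset]
        ext x
        simp only [Set.mem_union, List.mem_append, Set.mem_setOf_eq]
        tauto
      rw [hget, hsets]
      exact hS w

lemma extends_mulMon {A B : Set (Mon n)} (c : Mon n) (h : ExtendsByLinearQuotients A B) :
    ExtendsByLinearQuotients (mulMon c A) (mulMon c B) := by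
  obtain ⟨hAB, hGAB, L, hn, hm, hc⟩ := h
  have hinj : Function.Injective (fun v : Mon n => c + v) := fun x y h => by
    simpa using add_left_cancel h
  refine ⟨?_, ?_, L.map (fun v => c + v), hn.map hinj, ?_, ?_⟩
  · rintro x ⟨v, hv, rfl⟩; exact ⟨v, hAB hv, rfl⟩
  · rw [minGens_mulMon, minGens_mulMon]; exact Set.image_mono hGAB
  · intro u
    simp only [List.mem_map, minGens_mulMon, Set.mem_image]
    constructor
    · rintro ⟨v, hv, rfl⟩
      obtain ⟨h1, h2⟩ := (hm v).1 hv
      exact ⟨⟨v, h1, rfl⟩, fun ⟨v', hv', he⟩ => h2 (hinj he ▸ hv')⟩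
    · rintro ⟨⟨v, hv, rfl⟩, h2⟩
      exact ⟨v, (hm v).2 ⟨hv, fun hA => h2 ⟨v, hA, rfl⟩⟩, rfl⟩
  · rintro ⟨i, hi⟩
    have hi' : i < L.length := by simpa using hi
    obtain ⟨S, hS⟩ := hc ⟨i, hi'⟩
    refine ⟨S, fun w => ?_⟩
    have hget : (L.map (fun v => c + v)).get ⟨i, hi⟩ = c + L.get ⟨i, hi'⟩ := by
      simp
    have hsets : minGens (mulMon c A) ∪ {u | u ∈ (L.map (fun v => c + v)).take i}
        = (fun v => c + v) '' (minGens A ∪ {u | u ∈ L.take i}) := by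
      rw [minGens_mulMon, Set.image_union]
      congr 1
      ext x
      simp [← List.map_take, List.mem_map]
    rw [hget, hsets]
    have : w + (c + L.get ⟨i, hi'⟩) = c + (w + L.get ⟨i, hi'⟩) := by ring
    rw [this, mem_genBy_image]
    exact hS w
/-- Descending lexicographic relation on monomials. -/
def rLex {n : ℕ} (u v : Mon n) : Prop := toLex v ≤ toLex u

instance (n : ℕ) : WellFoundedLT (Fin n) := inferInstance

instance {n : ℕ} : IsTrans (Mon n) rLex := ⟨fun _ _ _ h1 h2 => le_trans h2 h1⟩
instance {n : ℕ} : IsAntisymm (Mon n) rLex :=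
  ⟨fun a b h1 h2 => congrArg ofLex (le_antisymm h2 h1)⟩
instance {n : ℕ} : IsTotal (Mon n) rLex := by
  constructor
  intro a b
  unfold rLex
  exact le_total (toLex b) (toLex a)
noncomputable instance {n : ℕ} : DecidableRel (@rLex n) := fun _ _ => Classical.dec _

lemma part1 (n d : ℕ) (a : Fin n → ℕ) (i0 : Fin n) :
    ExtendsByLinearQuotients (mulMon (Pi.single i0 1) (veronese n d a))
      (veronese n (d + 1) (Function.update a i0 (a i0 + 1))) := by
  set e : Mon n := Pi.single i0 1 with he
  set a' : Fin n → ℕ := Function.update a i0 (a i0 + 1) with ha'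
  have he_app : ∀ j, e j = if j = i0 then 1 else 0 := fun j => Pi.single_apply i0 1 j
  have ha'_app : ∀ j, a' j = if j = i0 then a i0 + 1 else a j := fun j => by
    by_cases h : j = i0 <;> simp [ha', h, Function.update_apply]
  set I : Set (Mon n) := mulMon e (veronese n d a) with hI
  set J : Set (Mon n) := veronese n (d + 1) a' with hJ
  have hGI : minGens I = (fun v => e + v) '' {u | degree u = d ∧ ∀ i, u i ≤ a i} := by
    rw [hI, minGens_mulMon, minGens_veronese]
  have hGJ : minGens J = {v | degree v = d + 1 ∧ ∀ i, v i ≤ a' i} := by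
    rw [hJ, minGens_veronese]
  set D : Set (Mon n) := {v | degree v = d + 1 ∧ (∀ j, v j ≤ a j) ∧ v i0 = 0} with hD
  have hGIiff : ∀ v : Mon n, v ∈ minGens I ↔
      ∃ u : Mon n, degree u = d ∧ (∀ i, u i ≤ a i) ∧ v = e + u := by
    intro v
    rw [hGI]
    constructor
    · rintro ⟨u, ⟨h1, h2⟩, rfl⟩; exact ⟨u, h1, h2, rfl⟩
    · rintro ⟨u, h1, h2, rfl⟩; exact ⟨u, ⟨h1, h2⟩, rfl⟩
  have hGIJ : ∀ v ∈ minGens I, v ∈ minGens J := by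
    intro x hx
    rw [hGIiff] at hx
    obtain ⟨u, h1, h2, rfl⟩ := hx
    rw [hGJ]
    refine ⟨by rw [degree_add, degree_single, h1]; omega, fun j => ?_⟩
    rw [Pi.add_apply, he_app, ha'_app]
    by_cases hj : j = i0
    · subst hj
      simp only [if_pos]
      have := h2 j
      omega
    · simp only [if_neg hj]
      have := h2 j
      omega
  have hDiff : ∀ v : Mon n, (v ∈ minGens J ∧ v ∉ minGens I) ↔ v ∈ D := by
    intro v
    constructor
    · rintro ⟨hvJ, hvI⟩
      rw [hGJ] at hvJ
      obtain ⟨hv1, hv2⟩ := hvJ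
      have hvi0 : v i0 = 0 := by
        by_contra h
        apply hvI
        rw [hGIiff]
        refine ⟨fun j => if j = i0 then v i0 - 1 else v j, ?_, ?_, ?_⟩
        · have hveq : v = e + fun j => if j = i0 then v i0 - 1 else v j := by
            funext j
            simp only [Pi.add_apply, he_app]
            by_cases hj : j = i0
            · subst hj; simp only [if_pos]; omega
            · simp only [if_neg hj]; omega
          have := congrArg degree hveq
          rw [degree_add, degree_single] at this
          omega
        · intro j
          have hj2 := hv2 j
          rw [ha'_app] at hj2
          by_cases hj : j = i0
          · subst hj; simp only [if_pos] at hj2 ⊢; omega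
          · simp only [if_neg hj] at hj2 ⊢; omega
        · funext j
          simp only [Pi.add_apply, he_app]
          by_cases hj : j = i0
          · subst hj; simp only [if_pos]; omega
          · simp only [if_neg hj]; omega
      refine ⟨hv1, fun j => ?_, hvi0⟩
      have hj2 := hv2 j
      rw [ha'_app] at hj2
      by_cases hj : j = i0
      · subst hj; omega
      · simpa [hj] using hj2
    · rintro ⟨hv1, hv2, hv3⟩
      constructor
      · rw [hGJ]
        refine ⟨hv1, fun j => ?_⟩
        rw [ha'_app]
        by_cases hj : j = i0
        · subst hj; simp only [if_pos]; have := hv2 j; omega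
        · simp only [if_neg hj]; exact hv2 j
      · rw [hGIiff]
        rintro ⟨u, _, _, hvu⟩
        have := congrFun hvu i0
        rw [Pi.add_apply, he_app] at this
        simp only [if_pos] at this
        omega
  have hfin : D.Finite := by
    apply (Set.finite_Icc (0 : Mon n) a).subset
    rintro v ⟨_, hv2, _⟩
    exact Set.mem_Icc.mpr ⟨fun j => Nat.zero_le _, fun j => hv2 j⟩
  set L : List (Mon n) := hfin.toFinset.sort rLex with hL
  have hmemL : ∀ u, u ∈ L ↔ u ∈ D := fun u => by
    rw [hL, Finset.mem_sort, Set.Finite.mem_toFinset]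
  have hnodup : L.Nodup := Finset.sort_nodup _ _
  have hpw : ∀ i j : Fin L.length, i < j → rLex (L.get i) (L.get j) :=
    fun i j hij => List.pairwise_iff_get.1 (Finset.pairwise_sort _ _) i j hij
  refine ⟨?_, hGIJ, L, hnodup, fun u => by rw [hmemL, hDiff], ?_⟩
  · -- I ⊆ J
    rintro x ⟨v, ⟨g, hg1, hg2, hg3⟩, rfl⟩
    refine ⟨e + g, ?_, fun j => ?_, add_le_add_right hg3 e⟩
    · rw [degree_add, degree_single, hg1]; omega
    · rw [Pi.add_apply, he_app, ha'_app]
      by_cases hj : j = i0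
      · subst hj; simp only [if_pos]; have := hg2 j; omega
      · simp only [if_neg hj]; have := hg2 j; omega
  · -- the colon condition
    rintro ⟨k, hk⟩
    set v : Mon n := L.get ⟨k, hk⟩ with hv
    have hvD : v ∈ D := (hmemL v).1 (by rw [hv]; exact List.get_mem L ⟨k, hk⟩)
    obtain ⟨hvd, hva, hvi0⟩ := hvD
    set G : Set (Mon n) := minGens I ∪ {u | u ∈ L.take k} with hG
    have hearlier : ∀ v' ∈ D, toLex v < toLex v' → v' ∈ L.take k := by
      intro v' hv' hlt
      obtain ⟨⟨j', hj'⟩, hgj⟩ := List.mem_iff_get.1 ((hmemL v').2 hv')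
      have hjk : j' < k := by
        rcases lt_trichotomy j' k with h | h | h
        · exact h
        · exfalso
          subst h
          have hvv : v = v' := by rw [hv, ← hgj]
          rw [← hvv] at hlt
          exact lt_irrefl _ hlt
        · exfalso
          have := hpw ⟨k, hk⟩ ⟨j', hj'⟩ h
          rw [hgj] at this
          exact absurd (lt_of_lt_of_le hlt this) (lt_irrefl _)
      rw [List.mem_take_iff_getElem]
      exact ⟨j', by omega, hgj⟩
    refine ⟨{t | Pi.single t 1 + v ∈ genBy G}, fun w => ⟨?_, ?_⟩⟩
    · -- forward direction
      rintro ⟨g, hgG, hle⟩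
      rcases hgG with hg | hg
      · -- the generator is in G(I)
        rw [hGIiff] at hg
        obtain ⟨u, hu1, hu2, rfl⟩ := hg
        have hwi0 : 1 ≤ w i0 := by
          have h1 := hle i0
          simp only [Pi.add_apply, he_app, if_pos] at h1
          omega
        refine ⟨i0, ?_, hwi0⟩
        have hs : ∃ s, 0 < v s := by
          by_contra h
          push_neg at h
          have : degree v = 0 := Finset.sum_eq_zero (fun i _ => Nat.le_zero.mp (h i))
          omega
        obtain ⟨s, hs⟩ := hs
        set u' : Mon n := fun j => if j = s then v s - 1 else v j with hu'
        have hu'v : u' + Pi.single s 1 = v := by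
          funext j
          simp only [Pi.add_apply, hu', Pi.single_apply]
          by_cases hj : j = s
          · subst hj; simp only [if_pos]; omega
          · simp only [if_neg hj]; omega
        refine ⟨e + u', Or.inl ?_, ?_⟩
        · rw [hGIiff]
          refine ⟨u', ?_, fun j => ?_, rfl⟩
          · have := congrArg degree hu'v
            rw [degree_add, degree_single] at this
            omega
          · simp only [hu']
            by_cases hj : j = s
            · subst hj; simp only [if_pos]; have := hva j; omega
            · simp only [if_neg hj]; exact hva j
        · refine add_le_add (le_refl e) (fun j => ?_)
          simp only [hu']
          by_cases hj : j = s
          · subst hj; simp only [if_pos]; omega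
          · simp only [if_neg hj]; exact le_refl _
      · -- the generator is an earlier element of the list
        have hgD : g ∈ D := (hmemL g).1 (List.take_subset k L hg)
        obtain ⟨hgd, hga, hgi0⟩ := hgD
        obtain ⟨jg, hjg, hjgeq⟩ := List.mem_take_iff_getElem.1 hg
        have hjgk : jg < k := by omega
        have hjgL : jg < L.length := by omega
        have hne : v ≠ g := by
          intro h
          have h2 : (⟨k, hk⟩ : Fin L.length) = ⟨jg, hjgL⟩ := by
            apply hnodup.get_inj_iff.mp
            rw [← hv, h]
            exact hjgeq.symm
          simp only [Fin.mk.injEq] at h2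
          omega
        have hlex : toLex v ≤ toLex g := by
          have h2 := hpw ⟨jg, hjgL⟩ ⟨k, hk⟩ (by simpa using hjgk)
          rw [← hv] at h2
          have h3 : L.get ⟨jg, hjgL⟩ = g := hjgeq
          rw [h3] at h2
          exact h2
        have hlt : toLex v < toLex g :=
          lt_of_le_of_ne hlex (fun h => hne (congrArg ofLex h))
        obtain ⟨t, ht1, ht2⟩ := hlt
        simp only [Pi.toLex_apply] at ht1 ht2
        have hwt : 1 ≤ w t := by
          have h1 := hle t
          simp only [Pi.add_apply] at h1
          omega
        refine ⟨t, ?_, hwt⟩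
        have hsex : ∃ s, g s < v s := by
          by_contra h
          push_neg at h
          have : degree v < degree g :=
            Finset.sum_lt_sum (fun i _ => h i) ⟨t, Finset.mem_univ t, ht2⟩
          omega
        obtain ⟨s, hsv⟩ := hsex
        have hst : t ≠ s := fun h => by rw [h] at ht2; omega
        have hsnlt : ¬ s < t := fun h => by rw [ht1 s h] at hsv; omega
        have hti0 : t ≠ i0 := by
          intro h
          rw [h, hvi0, hgi0] at ht2
          exact lt_irrefl _ ht2
        have hsi0 : s ≠ i0 := by
          intro h
          rw [h, hvi0] at hsv
          omega
        set v' : Mon n := fun j => if j = t then v t + 1 else if j = s then v s - 1 else v j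
          with hv'
        have hv'D : v' ∈ D := by
          refine ⟨?_, fun j => ?_, ?_⟩
          · have heq : v' + Pi.single s 1 = v + Pi.single t 1 := by
              funext j
              simp only [Pi.add_apply, hv', Pi.single_apply]
              by_cases hjt : j = t
              · subst hjt
                simp only [if_pos, if_neg hst, if_neg (Ne.symm hst)]
                omega
              · by_cases hjs : j = s
                · subst hjs
                  simp only [if_neg hjt, if_pos]
                  omega
                · simp only [if_neg hjt, if_neg hjs]
            have := congrArg degree heq
            rw [degree_add, degree_add, degree_single, degree_single] at this
            omega
          · simp only [hv']
            by_cases hjt : j = t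
            · subst hjt
              simp only [if_pos]
              have := hga j
              omega
            · by_cases hjs : j = s
              · subst hjs
                simp only [if_neg hjt, if_pos]
                have := hva j
                omega
              · simp only [if_neg hjt, if_neg hjs]
                exact hva j
          · simp only [hv', if_neg (Ne.symm hti0), if_neg (Ne.symm hsi0)]
            exact hvi0
        have hv'lt : toLex v < toLex v' := by
          refine ⟨t, fun j hj => ?_, ?_⟩
          · have hjt : j ≠ t := ne_of_lt hj
            have hjs : j ≠ s := fun h => hsnlt (h ▸ hj)
            simp only [Pi.toLex_apply, hv', if_neg hjt, if_neg hjs]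
          · simp only [Pi.toLex_apply, hv', if_pos]
            omega
        refine ⟨v', Or.inr (hearlier v' hv'D hv'lt), fun j => ?_⟩
        simp only [Pi.add_apply, hv', Pi.single_apply]
        by_cases hjt : j = t
        · subst hjt
          simp only [if_pos]
          omega
        · by_cases hjs : j = s
          · subst hjs
            simp only [if_neg hjt, if_pos, if_neg (fun h : t = j => hjt h.symm)]
            omega
          · simp only [if_neg hjt, if_neg hjs, if_neg (fun h : t = j => hjt h.symm)]
            omega
    · -- backward direction
      rintro ⟨t, ht, hwt⟩
      obtain ⟨g, hgG, hle⟩ := ht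
      refine ⟨g, hgG, le_trans hle (fun j => ?_)⟩
      simp only [Pi.add_apply, Pi.single_apply]
      by_cases hj : j = t
      · subst hj; simp only [if_pos]; omega
      · simp only [if_neg (fun h : j = t => hj h)]
        have : (if t = j then 1 else 0) = 0 := if_neg (fun h => hj h.symm)
        omega
lemma mulMon_mulMon {n : ℕ} (u w : Mon n) (I : Set (Mon n)) :
    mulMon u (mulMon w I) = mulMon (u + w) I := by
  ext x
  constructor
  · rintro ⟨y, ⟨v, hv, rfl⟩, rfl⟩
    exact ⟨v, hv, by simp [add_assoc]⟩
  · rintro ⟨v, hv, rfl⟩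
    exact ⟨w + v, ⟨v, hv, rfl⟩, by simp [add_assoc]⟩

lemma part2 (n d : ℕ) (a : Fin n → ℕ) : ∀ (m : ℕ) (c : Mon n), degree c = m →
    ExtendsByLinearQuotients (mulMon c (veronese n d a))
      (veronese n (d + degree c) (fun i => a i + c i)) := by
  intro m
  induction m with
  | zero =>
    intro c hc
    have hc0 : c = 0 := by
      funext j
      have h1 : c j ≤ degree c := Finset.single_le_sum (fun i _ => Nat.zero_le (c i))
        (Finset.mem_univ j)
      simp only [hc] at h1
      simpa using h1
    subst hc0
    have h2 : d + degree (0 : Mon n) = d := by simp [degree]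
    have h3 : (fun i => a i + (0 : Mon n) i) = a := by funext j; simp
    have h4 : mulMon (0 : Mon n) (veronese n d a) = veronese n d a := by
      ext x
      constructor
      · rintro ⟨v, hv, rfl⟩; simpa using hv
      · intro hx; exact ⟨x, hx, by simp⟩
    rw [h2, h3, h4]
    exact extends_refl _
  | succ m ih =>
    intro c hc
    have hex : ∃ i, 0 < c i := by
      by_contra h
      push_neg at h
      have : degree c = 0 := Finset.sum_eq_zero (fun i _ => Nat.le_zero.mp (h i))
      omega
    obtain ⟨i, hi⟩ := hex
    set c' : Mon n := fun j => if j = i then c j - 1 else c j with hc'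
    have hcc : c = Pi.single i 1 + c' := by
      funext j
      simp only [Pi.add_apply, Pi.single_apply, hc']
      by_cases hj : j = i
      · subst hj; simp only [if_pos]; omega
      · simp only [if_neg hj, if_neg (fun h : i = j => hj h.symm)]; omega
    have hdc' : degree c' = m := by
      have := congrArg degree hcc
      rw [degree_add, degree_single] at this
      omega
    have h1 := ih c' hdc'
    rw [hdc'] at h1
    have h2 := extends_mulMon (Pi.single i 1) h1
    rw [mulMon_mulMon, ← hcc] at h2
    have h4 := part1 n (d + m) (fun j => a j + c' j) i
    have hJeq : veronese n (d + m + 1)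
        (Function.update (fun j => a j + c' j) i ((fun j => a j + c' j) i + 1))
        = veronese n (d + degree c) (fun j => a j + c j) := by
      have e1 : d + m + 1 = d + degree c := by omega
      have e2 : Function.update (fun j => a j + c' j) i ((fun j => a j + c' j) i + 1)
          = fun j => a j + c j := by
        funext j
        rw [Function.update_apply]
        by_cases hj : j = i
        · subst hj
          simp [hc']
          omega
        · simp [hc', hj]
      rw [e1, e2]
    rw [hJeq] at h4
    exact extends_trans h2 h4

/-- `x_i · I_{(d;a)}` extends by linear quotients to
`I_{(d+1; a_1,...,a_i+1,...,a_n)}`; consequently `x_1^{c_1}···x_n^{c_n} · I_{(d;a)}`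
extends by linear quotients to `I_{(d+Σc_i; a+c)}`. -/
theorem stmt_14 (n d : ℕ) (a : Fin n → ℕ) (hd : 0 < d) (ha : ∀ i, 0 < a i) :
    (∀ i : Fin n,
      ExtendsByLinearQuotients (mulMon (Pi.single i 1) (veronese n d a))
        (veronese n (d + 1) (Function.update a i (a i + 1)))) ∧
    (∀ c : Mon n,
      ExtendsByLinearQuotients (mulMon c (veronese n d a))
        (veronese n (d + degree c) (fun i => a i + c i))) := by
  exact ⟨fun i => part1 n d a i, fun c => part2 n d a (degree c) c rfl⟩
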